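/- arXiv:2010.09963 — 2 statements merged into one kernel-verified Lean document; each statement's English description precedes it below -/
import Mathlib

section
/- Let b ∈ ℕ³ and suppose K^b I is disconnected (equivalently dim_k H̃₀(K^b I;k) ≠ 0), that v = i is an isolated vertex of K^b I (i.e. {i} ∈ K^b I but no edge of K^b I contains i), and that a ∈ ℕ³ is such that x^a is a minimal monomial generator of I and b − a = n·e_i for some n ≥ 1 (so a is the unique generator degree lying behind b in the i-direction). Then the degree-0 canonical sylvan matrix entry from the vertex i to the empty face ∅ satisfies D_{∅,i}^{a,b} = 1. -/
open Classical

noncomputable section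

namespace Sylvan

/-- Exponent vectors in three variables. -/
abbrev V3 := Fin 3 → ℕ

/-- The `i`-th standard basis vector. -/
def stdVec (i : Fin 3) : V3 := fun j => if j = i then 1 else 0

/-- A monomial ideal, identified with its (upward closed) set of exponent vectors. -/
def IsMonomialIdeal (I : Set V3) : Prop :=
  ∀ ⦃c d : V3⦄, c ∈ I → (∀ i, c i ≤ d i) → d ∈ I

/-- The 0-1 indicator vector of a squarefree face. -/
def ind (τ : Finset (Fin 3)) : V3 := fun i => if i ∈ τ then 1 else 0

/-- The Koszul simplicial complex of `I` in degree `b`: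
faces `τ` with `b ≥ τ` and `x^(b-τ) ∈ I`. -/
def K (I : Set V3) (b : V3) : Set (Finset (Fin 3)) :=
  {τ | (∀ i, ind τ i ≤ b i) ∧ (fun i => b i - ind τ i) ∈ I}

/-- `x^a` is a minimal monomial generator of `I`. -/
def IsMinGen (I : Set V3) (a : V3) : Prop :=
  a ∈ I ∧ ∀ c ∈ I, (∀ i, c i ≤ a i) → c = a

/-- Reduced simplicial chains: formal `k`-linear combinations of faces
(the empty face included). -/
abbrev Ch (k : Type) [Field k] := Finset (Fin 3) →₀ k

variable (k : Type) [Field k]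

/-- The sign `(-1)^(position of v in σ)`. -/
def esgn (v : Fin 3) (σ : Finset (Fin 3)) : ℤ :=
  (-1 : ℤ) ^ (σ.filter (fun u => u < v)).card

/-- The boundary of a single face. -/
def bd (σ : Finset (Fin 3)) : Ch k :=
  ∑ v ∈ σ, Finsupp.single (σ.erase v) ((esgn v σ : ℤ) : k)

/-- The (reduced) simplicial boundary operator. -/
def bdry : Ch k →ₗ[k] Ch k :=
  Finsupp.lsum k fun σ => LinearMap.toSpanSingleton k (Ch k) (bd k σ)

/-- `coeffSign k v σ` is the coefficient of `σ \ {v}` in `∂σ`,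
i.e. the sign `(-1)^{v,σ}` of the paper. -/
def coeffSign (v : Fin 3) (σ : Finset (Fin 3)) : k :=
  bdry k (Finsupp.single σ (1:k)) (σ.erase v)

/-- Faces of cardinality `c` (dimension `c-1`) of a simplicial complex. -/
def faces (Kc : Set (Finset (Fin 3))) (c : ℕ) : Set (Finset (Fin 3)) :=
  {σ | σ ∈ Kc ∧ σ.card = c}

/-- Basis chains attached to a set of faces. -/
def sset (A : Set (Finset (Fin 3))) : Set (Ch k) :=
  (fun σ => Finsupp.single σ (1:k)) '' A

/-- The chain group `C̃_{c-1}(K;k)`, as the span of its card-`c` faces. -/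
def chains (Kc : Set (Finset (Fin 3))) (c : ℕ) : Submodule k (Ch k) :=
  Submodule.span k (sset k (faces Kc c))

/-- The boundaries `B̃_{c-1}(K;k) = ∂ C̃_c(K;k)`, sitting among card-`c` chains. -/
def bdries (Kc : Set (Finset (Fin 3))) (c : ℕ) : Submodule k (Ch k) :=
  (chains k Kc (c+1)).map (bdry k)

/-- A shrubbery in dimension `c-1` (faces of cardinality `c`): a set `T` of card-`c`
faces whose boundaries form a basis of `∂ C̃_{c-1}(K;k)`. -/
def IsShrubbery (Kc : Set (Finset (Fin 3))) (c : ℕ) (T : Finset (Finset (Fin 3))) : Prop :=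
  (T : Set (Finset (Fin 3))) ⊆ faces Kc c ∧
  LinearIndependent k
    (fun σ : (T : Set (Finset (Fin 3))) => bdry k (Finsupp.single (σ : Finset (Fin 3)) (1:k))) ∧
  Submodule.span k ((fun σ => bdry k (Finsupp.single σ (1:k))) '' (T : Set (Finset (Fin 3)))) =
    (chains k Kc c).map (bdry k)

/-- A stake set in dimension `c-1` (faces of cardinality `c`): a set `S` of card-`c`
faces whose complement maps to a basis of `C̃/B̃`. -/
def IsStakeSet (Kc : Set (Finset (Fin 3))) (c : ℕ) (S : Finset (Finset (Fin 3))) : Prop :=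
  (S : Set (Finset (Fin 3))) ⊆ faces Kc c ∧
  Submodule.span k (sset k (faces Kc c \ (S : Set (Finset (Fin 3))))) ⊓ bdries k Kc c = ⊥ ∧
  Submodule.span k (sset k (faces Kc c \ (S : Set (Finset (Fin 3))))) ⊔ bdries k Kc c =
    chains k Kc c

/-- The circuit `ζ(τ)` of a face `τ` with respect to a shrubbery `T`:
the unique cycle of the form `τ - t` with `t ∈ span T`. -/
def circuit (T : Finset (Finset (Fin 3))) (τ : Finset (Fin 3)) : Ch k :=
  if h : ∃! z : Ch k, bdry k z = 0 ∧
      Finsupp.single τ (1:k) - z ∈ Submodule.span k (sset k (T : Set (Finset (Fin 3))))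
  then h.exists.choose else 0

/-- The shrub `s(σ)` of a stake `σ` with respect to a hedge `(S,T)`:
the unique chain in `span T` whose boundary has coefficient `1` on `σ` and `0`
on all other stakes. -/
def shrub (S T : Finset (Finset (Fin 3))) (σ : Finset (Fin 3)) : Ch k :=
  if h : ∃! s : Ch k, s ∈ Submodule.span k (sset k (T : Set (Finset (Fin 3)))) ∧
      bdry k s σ = 1 ∧ ∀ σ' ∈ S, σ' ≠ σ → bdry k s σ' = 0
  then h.exists.choose else 0

/-- The hedge rim `r(τ)` of a face `τ` with respect to a stake set `S`:
the unique chain supported outside `S` with `τ - r(τ)` a boundary. -/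
def hedgeRim (Kc : Set (Finset (Fin 3))) (c : ℕ) (S : Finset (Finset (Fin 3)))
    (τ : Finset (Fin 3)) : Ch k :=
  if h : ∃! r : Ch k,
      r ∈ Submodule.span k (sset k (faces Kc c \ (S : Set (Finset (Fin 3))))) ∧
      Finsupp.single τ (1:k) - r ∈ bdries k Kc c
  then h.exists.choose else 0

/-- The points of the saturated decreasing lattice path from `pt a d n` down to `a`
encoded by the list of directions `d` (read from `a` upwards). -/
def pt (a : V3) {n : ℕ} (d : Fin n → Fin 3) (m : ℕ) : V3 :=
  fun i => a i + ∑ m' ∈ Finset.range m, (if h : m' < n then stdVec (d ⟨m', h⟩) i else 0)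

/-- The data of a hedgerow: `(Sb, S, T, Ta)`. -/
abbrev HRData (n : ℕ) :=
  Finset (Finset (Fin 3)) × (Fin (n+1) → Finset (Finset (Fin 3))) ×
    (Fin (n+1) → Finset (Finset (Fin 3))) × Finset (Finset (Fin 3))

/-- A hedgerow in homological dimension `c-1` along the lattice path from `pt a d n`
down to `a`: a stake set in the Koszul complex at the top, a hedge at each interior
lattice point, and a shrubbery at the bottom.  (Unused components are pinned to `∅`.) -/
def IsHedgerow (I : Set V3) (a : V3) {n : ℕ} (d : Fin n → Fin 3) (c : ℕ)
    (h : HRData n) : Prop :=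
  IsStakeSet k (K I (pt a d n)) c h.1 ∧
  (∀ m : Fin (n+1), 0 < (m:ℕ) → (m:ℕ) < n →
    IsStakeSet k (K I (pt a d m)) (c-1) (h.2.1 m) ∧
    IsShrubbery k (K I (pt a d m)) c (h.2.2.1 m)) ∧
  (∀ m : Fin (n+1), ((m:ℕ) = 0 ∨ (m:ℕ) = n) → h.2.1 m = ∅ ∧ h.2.2.1 m = ∅) ∧
  IsShrubbery k (K I a) (c-1) h.2.2.2

/-- `Δ_{c-1,λ} I`: the number of hedgerows along the lattice path. -/
def Delta (I : Set V3) (a : V3) {n : ℕ} (d : Fin n → Fin 3) (c : ℕ) : ℕ :=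
  Nat.card {h : HRData n // IsHedgerow k I a d c h}

/-- The data of a chain-link fence: a hedgerow together with the faces `τ_ℓ` and
`σ_ℓ` (indexed here by the lattice point `pt a d m`, so `τ_ℓ = tau (n-ℓ)` and
`σ_ℓ = sig (n-ℓ)`). -/
abbrev FData (n : ℕ) :=
  HRData n × (Fin (n+1) → Finset (Fin 3)) × (Fin (n+1) → Finset (Fin 3))

/-- A chain-link fence from the card-`c` face `τtop` of the Koszul complex at the top
of the lattice path to the card-`(c-1)` face `σbot` of the Koszul complex at the
bottom. -/
def IsFence (I : Set V3) (a : V3) {n : ℕ} (d : Fin n → Fin 3) (c : ℕ)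
    (σbot τtop : Finset (Fin 3)) (f : FData n) : Prop :=
  IsHedgerow k I a d c f.1 ∧
  (∀ m : Fin (n+1), 0 < (m:ℕ) → f.2.1 m ∈ faces (K I (pt a d m)) c) ∧
  (∀ m : Fin (n+1), (m:ℕ) < n → f.2.2 m ∈ faces (K I (pt a d m)) (c-1)) ∧
  f.2.1 0 = ∅ ∧ f.2.2 (Fin.last n) = ∅ ∧
  hedgeRim k (K I (pt a d n)) c f.1.1 τtop (f.2.1 (Fin.last n)) ≠ 0 ∧
  (∀ m : Fin n, f.2.2 m.castSucc = (f.2.1 m.succ).erase (d m)) ∧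
  (∀ m : Fin (n+1), 0 < (m:ℕ) → (m:ℕ) < n →
    f.2.2 m ∈ f.1.2.1 m ∧
    shrub k (f.1.2.1 m) (f.1.2.2.1 m) (f.2.2 m) (f.2.1 m) ≠ 0) ∧
  circuit k f.1.2.2.2 (f.2.2 0) σbot ≠ 0

/-- The weight of a chain-link fence: the product of the boundary-link coefficient,
the chain-link coefficients, the containment coefficients, and the cycle-link
coefficient. -/
def weight (I : Set V3) (a : V3) {n : ℕ} (d : Fin n → Fin 3) (c : ℕ)
    (σbot τtop : Finset (Fin 3)) (f : FData n) : k :=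
  hedgeRim k (K I (pt a d n)) c f.1.1 τtop (f.2.1 (Fin.last n)) *
  (∏ m : Fin (n+1), if 0 < (m:ℕ) ∧ (m:ℕ) < n
      then shrub k (f.1.2.1 m) (f.1.2.2.1 m) (f.2.2 m) (f.2.1 m) else 1) *
  (∏ m : Fin n, bdry k (Finsupp.single (f.2.1 m.succ) (1:k)) (f.2.2 m.castSucc)) *
  circuit k f.1.2.2.2 (f.2.2 0) σbot

/-- `D_{σ,τ}^{a,b,λ}`: the contribution of the single lattice path `λ` (encoded by
its direction sequence `d`) to the canonical sylvan matrix entry. -/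
def Dpath (I : Set V3) (a : V3) {n : ℕ} (d : Fin n → Fin 3) (c : ℕ)
    (σbot τtop : Finset (Fin 3)) : k :=
  ((Delta k I a d c : k))⁻¹ *
    ∑ᶠ f ∈ {f : FData n | IsFence k I a d c σbot τtop f}, weight k I a d c σbot τtop f

/-- `|b - a|`, the common length of all saturated decreasing lattice paths. -/
def nlen (a b : V3) : ℕ := ∑ i, (b i - a i)

/-- The canonical sylvan matrix entry `D_{σ,τ}^{a,b}`: a sum over all saturated
decreasing lattice paths from `b` to `a`. -/
def D (I : Set V3) (a b : V3) (c : ℕ) (σbot τtop : Finset (Fin 3)) : k :=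
  ∑ᶠ d ∈ {d : Fin (nlen a b) → Fin 3 | pt a d (nlen a b) = b},
    Dpath k I a d c σbot τtop

/-- `K` has exactly the set `F` as facets, i.e. it is the downward closure of `F`. -/
def hasFacets (Kc F : Set (Finset (Fin 3))) : Prop :=
  Kc = {σ | ∃ f ∈ F, σ ⊆ f}

/-- `dim_k H̃₀(K;k) ≠ 0`: some reduced 0-cycle is not a boundary. -/
def H0nontrivial (Kc : Set (Finset (Fin 3))) : Prop :=
  ¬ (chains k Kc 1 ⊓ LinearMap.ker (bdry k) ≤ bdries k Kc 1)


-- ==================== auxiliary lemmas ====================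

lemma bdry_single (σ : Finset (Fin 3)) (x : k) :
    bdry k (Finsupp.single σ x) = x • bd k σ := by
  rw [bdry, Finsupp.lsum_single, LinearMap.toSpanSingleton_apply]

lemma bd_empty : bd k (∅ : Finset (Fin 3)) = 0 := by
  simp [bd]

lemma bd_singleton (v : Fin 3) : bd k ({v} : Finset (Fin 3)) = Finsupp.single ∅ 1 := by
  simp [bd, esgn, Finset.filter_singleton]

lemma span_sset (A : Set (Finset (Fin 3))) :
    Submodule.span k (sset k A) = Finsupp.supported k k A :=
  (Finsupp.supported_eq_span_single k A).symm

lemma chains_eq (Kc : Set (Finset (Fin 3))) (c : ℕ) :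
    chains k Kc c = Finsupp.supported k k (faces Kc c) := span_sset k _

lemma supported_singleton (x : Finset (Fin 3)) :
    Finsupp.supported k k ({x} : Set (Finset (Fin 3))) =
      Submodule.span k {Finsupp.single x (1:k)} := by
  rw [Finsupp.supported_eq_span_single, Set.image_singleton]

lemma bdries_eq (Kc : Set (Finset (Fin 3))) (c : ℕ) :
    bdries k Kc c = Submodule.span k (bd k '' faces Kc (c+1)) := by
  rw [bdries, chains, Submodule.map_span]
  congr 1
  rw [sset, Set.image_image]
  refine Set.image_congr fun σ _ => ?_
  rw [bdry_single, one_smul]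

lemma esgn_cast_ne_zero (v : Fin 3) (σ : Finset (Fin 3)) : ((esgn v σ : ℤ) : k) ≠ 0 := by
  unfold esgn
  rcases Nat.even_or_odd ((σ.filter (fun u => u < v)).card) with h | h
  · rw [h.neg_one_pow]; simp
  · rw [h.neg_one_pow]; simp

lemma circuit_spec {T : Finset (Finset (Fin 3))} {τ : Finset (Fin 3)} {z : Ch k}
    (hz : bdry k z = 0 ∧
      Finsupp.single τ (1:k) - z ∈ Submodule.span k (sset k (T : Set (Finset (Fin 3)))))
    (hu : ∀ w : Ch k, (bdry k w = 0 ∧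
      Finsupp.single τ (1:k) - w ∈ Submodule.span k (sset k (T : Set (Finset (Fin 3))))) → w = z) :
    circuit k T τ = z := by
  have hex : ∃! z' : Ch k, bdry k z' = 0 ∧
      Finsupp.single τ (1:k) - z' ∈ Submodule.span k (sset k (T : Set (Finset (Fin 3)))) :=
    ⟨z, hz, hu⟩
  rw [circuit, dif_pos hex]
  exact hu _ hex.exists.choose_spec

lemma shrub_spec {S T : Finset (Finset (Fin 3))} {σ : Finset (Fin 3)} {z : Ch k}
    (hz : z ∈ Submodule.span k (sset k (T : Set (Finset (Fin 3)))) ∧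
      bdry k z σ = 1 ∧ ∀ σ' ∈ S, σ' ≠ σ → bdry k z σ' = 0)
    (hu : ∀ w : Ch k, (w ∈ Submodule.span k (sset k (T : Set (Finset (Fin 3)))) ∧
      bdry k w σ = 1 ∧ ∀ σ' ∈ S, σ' ≠ σ → bdry k w σ' = 0) → w = z) :
    shrub k S T σ = z := by
  have hex : ∃! s : Ch k, s ∈ Submodule.span k (sset k (T : Set (Finset (Fin 3)))) ∧
      bdry k s σ = 1 ∧ ∀ σ' ∈ S, σ' ≠ σ → bdry k s σ' = 0 := ⟨z, hz, hu⟩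
  rw [shrub, dif_pos hex]
  exact hu _ hex.exists.choose_spec

lemma hedgeRim_spec {Kc : Set (Finset (Fin 3))} {c : ℕ} {S : Finset (Finset (Fin 3))}
    {τ : Finset (Fin 3)} {z : Ch k}
    (hz : z ∈ Submodule.span k (sset k (faces Kc c \ (S : Set (Finset (Fin 3))))) ∧
      Finsupp.single τ (1:k) - z ∈ bdries k Kc c)
    (hu : ∀ w : Ch k, (w ∈ Submodule.span k (sset k (faces Kc c \ (S : Set (Finset (Fin 3))))) ∧
      Finsupp.single τ (1:k) - w ∈ bdries k Kc c) → w = z) :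
    hedgeRim k Kc c S τ = z := by
  have hex : ∃! r : Ch k,
      r ∈ Submodule.span k (sset k (faces Kc c \ (S : Set (Finset (Fin 3))))) ∧
      Finsupp.single τ (1:k) - r ∈ bdries k Kc c := ⟨z, hz, hu⟩
  rw [hedgeRim, dif_pos hex]
  exact hu _ hex.exists.choose_spec

-- circuit at the bottom complex
lemma circuit_empty : circuit k (∅ : Finset (Finset (Fin 3))) (∅ : Finset (Fin 3)) =
    Finsupp.single ∅ 1 := by
  apply circuit_spec
  · constructor
    · rw [bdry_single, bd_empty, smul_zero]
    · rw [sub_self]; exact Submodule.zero_mem _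
  · intro w hw
    have h2 := hw.2
    rw [Finset.coe_empty, sset, Set.image_empty, Submodule.span_empty, Submodule.mem_bot,
      sub_eq_zero] at h2
    exact h2.symm

-- shrub at the interior complex
lemma shrub_int (i : Fin 3) :
    shrub k ({∅} : Finset (Finset (Fin 3))) ({({i} : Finset (Fin 3))} : Finset (Finset (Fin 3)))
      (∅ : Finset (Fin 3)) = Finsupp.single {i} 1 := by
  apply shrub_spec
  · refine ⟨?_, ?_, ?_⟩
    · apply Submodule.subset_span
      exact ⟨{i}, by simp, rfl⟩
    · rw [bdry_single, bd_singleton, one_smul, Finsupp.single_eq_same]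
    · intro σ' hσ' hne
      exact absurd (Finset.mem_singleton.1 hσ') hne
  · intro w hw
    have h1 := hw.1
    rw [span_sset, Finsupp.mem_supported, Finset.coe_singleton] at h1
    have h1' : w.support ⊆ {({i} : Finset (Fin 3))} := fun x hx => by simpa using h1 hx
    have hw1 : w = Finsupp.single {i} (w {i}) := Finsupp.support_subset_singleton.1 h1'
    have h2 := hw.2.1
    rw [hw1, bdry_single, bd_singleton] at h2
    rw [Finsupp.smul_apply, Finsupp.single_eq_same, smul_eq_mul, mul_one] at h2
    rw [hw1, h2]

-- ==================== small complexes ====================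

lemma faces_pair0 (i : Fin 3) :
    faces ({∅, {i}} : Set (Finset (Fin 3))) 0 = {(∅ : Finset (Fin 3))} := by
  ext σ
  simp only [faces, Set.mem_setOf_eq, Set.mem_insert_iff, Set.mem_singleton_iff]
  constructor
  · rintro ⟨h1, h2⟩
    exact Finset.card_eq_zero.1 h2
  · rintro rfl
    exact ⟨Or.inl rfl, Finset.card_empty⟩

lemma faces_pair1 (i : Fin 3) :
    faces ({∅, {i}} : Set (Finset (Fin 3))) 1 = {({i} : Finset (Fin 3))} := by
  ext σ
  simp only [faces, Set.mem_setOf_eq, Set.mem_insert_iff, Set.mem_singleton_iff]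
  constructor
  · rintro ⟨rfl | rfl, h2⟩
    · simp at h2
    · rfl
  · rintro rfl
    exact ⟨Or.inr rfl, Finset.card_singleton _⟩

lemma stake0_char (i : Fin 3) (S : Finset (Finset (Fin 3))) :
    IsStakeSet k ({∅, {i}} : Set (Finset (Fin 3))) 0 S ↔ S = {∅} := by
  have hb : bdries k ({∅, {i}} : Set (Finset (Fin 3))) 0 =
      Submodule.span k {Finsupp.single (∅ : Finset (Fin 3)) (1:k)} := by
    rw [bdries_eq, faces_pair1, Set.image_singleton, bd_singleton]
  have hc : chains k ({∅, {i}} : Set (Finset (Fin 3))) 0 =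
      Submodule.span k {Finsupp.single (∅ : Finset (Fin 3)) (1:k)} := by
    rw [chains_eq, faces_pair0, supported_singleton]
  constructor
  · rintro ⟨hsub, hmeet, hjoin⟩
    have hSsub : S ⊆ {∅} := by
      intro x hx
      have hh := hsub hx
      rw [faces_pair0] at hh
      simpa using hh
    rcases Finset.subset_singleton_iff.1 hSsub with rfl | rfl
    · exfalso
      rw [Finset.coe_empty, Set.diff_empty, faces_pair0, span_sset, supported_singleton, hb,
        inf_idem] at hmeet
      have hm : Finsupp.single (∅ : Finset (Fin 3)) (1:k) ∈ (⊥ : Submodule k (Ch k)) :=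
        hmeet ▸ Submodule.mem_span_singleton_self _
      rw [Submodule.mem_bot] at hm
      exact one_ne_zero (Finsupp.single_eq_zero.1 hm)
    · rfl
  · rintro rfl
    refine ⟨?_, ?_, ?_⟩
    · intro x hx
      rw [faces_pair0]
      simpa using hx
    · rw [Finset.coe_singleton, faces_pair0, Set.diff_self, span_sset, Finsupp.supported_empty,
        bot_inf_eq]
    · rw [Finset.coe_singleton, faces_pair0, Set.diff_self, span_sset, Finsupp.supported_empty,
        bot_sup_eq, hb, hc]

lemma shrub1_char (i : Fin 3) (T : Finset (Finset (Fin 3))) :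
    IsShrubbery k ({∅, {i}} : Set (Finset (Fin 3))) 1 T ↔ T = {({i} : Finset (Fin 3))} := by
  have hmap : (chains k ({∅, {i}} : Set (Finset (Fin 3))) 1).map (bdry k) =
      Submodule.span k {Finsupp.single (∅ : Finset (Fin 3)) (1:k)} := by
    have h0 : (chains k ({∅, {i}} : Set (Finset (Fin 3))) 1).map (bdry k) =
        bdries k ({∅, {i}} : Set (Finset (Fin 3))) 0 := rfl
    rw [h0, bdries_eq, faces_pair1, Set.image_singleton, bd_singleton]
  constructor
  · rintro ⟨hsub, hind, hspan⟩
    have hTsub : T ⊆ {({i} : Finset (Fin 3))} := by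
      intro x hx
      have hh := hsub hx
      rw [faces_pair1] at hh
      simpa using hh
    rcases Finset.subset_singleton_iff.1 hTsub with rfl | rfl
    · exfalso
      rw [Finset.coe_empty, Set.image_empty, Submodule.span_empty] at hspan
      have hm : Finsupp.single (∅ : Finset (Fin 3)) (1:k) ∈ (⊥ : Submodule k (Ch k)) := by
        rw [hspan, hmap]
        exact Submodule.mem_span_singleton_self _
      rw [Submodule.mem_bot] at hm
      exact one_ne_zero (Finsupp.single_eq_zero.1 hm)
    · rfl
  · rintro rfl
    refine ⟨?_, ?_, ?_⟩
    · intro x hx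
      rw [faces_pair1]
      simpa using hx
    · rw [Finset.coe_singleton]
      apply linearIndependent_unique_iff.2
      intro h0
      have hd : ((default : ↥({({i} : Finset (Fin 3))} : Set (Finset (Fin 3)))) : Finset (Fin 3))
          = {i} := (default : ↥({({i} : Finset (Fin 3))} : Set (Finset (Fin 3)))).2
      rw [hd, bdry_single, bd_singleton, one_smul] at h0
      exact one_ne_zero (Finsupp.single_eq_zero.1 h0)
    · rw [Finset.coe_singleton, Set.image_singleton, bdry_single, bd_singleton, one_smul, hmap]

lemma shrubA_char (T : Finset (Finset (Fin 3))) :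
    IsShrubbery k ({∅} : Set (Finset (Fin 3))) 0 T ↔ T = ∅ := by
  have hfaces0 : faces ({∅} : Set (Finset (Fin 3))) 0 = {(∅ : Finset (Fin 3))} := by
    ext σ
    simp only [faces, Set.mem_setOf_eq, Set.mem_singleton_iff]
    constructor
    · rintro ⟨h1, _⟩; exact h1
    · rintro rfl; exact ⟨rfl, Finset.card_empty⟩
  have hmap : (chains k ({∅} : Set (Finset (Fin 3))) 0).map (bdry k) = ⊥ := by
    rw [chains_eq, hfaces0, supported_singleton, Submodule.map_span, Set.image_singleton,
      bdry_single, bd_empty, smul_zero, Submodule.span_zero_singleton]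
  constructor
  · rintro ⟨hsub, hind, _⟩
    rw [Finset.eq_empty_iff_forall_notMem]
    intro x hx
    have hxm : x ∈ (T : Set (Finset (Fin 3))) := hx
    have hx0 : x = ∅ := by
      have hh := hsub hxm
      rw [hfaces0] at hh
      simpa using hh
    apply hind.ne_zero ⟨x, hxm⟩
    show bdry k (Finsupp.single x (1:k)) = 0
    rw [hx0, bdry_single, bd_empty, smul_zero]
  · rintro rfl
    refine ⟨?_, ?_, ?_⟩
    · rw [Finset.coe_empty]; exact Set.empty_subset _
    · rw [Finset.coe_empty]; exact linearIndependent_empty_type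
    · rw [Finset.coe_empty, Set.image_empty, Submodule.span_empty, hmap]

-- ==================== top complex ====================

lemma stake_top_not_mem (Kc : Set (Finset (Fin 3))) (i : Fin 3)
    (hi : ({i} : Finset (Fin 3)) ∈ Kc) (hiso : ∀ σ ∈ Kc, σ.card = 2 → i ∉ σ)
    (S : Finset (Finset (Fin 3))) (hS : IsStakeSet k Kc 1 S) :
    ({i} : Finset (Fin 3)) ∉ S := by
  intro hmem
  set φ : Ch k →ₗ[k] k := Finsupp.lapply ({i} : Finset (Fin 3)) with hφ
  have h1 : Submodule.span k (sset k (faces Kc 1 \ (S : Set (Finset (Fin 3))))) ≤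
      LinearMap.ker φ := by
    rw [Submodule.span_le]
    rintro x ⟨σ, hσ, rfl⟩
    simp only [SetLike.mem_coe, LinearMap.mem_ker, hφ, Finsupp.lapply_apply]
    apply Finsupp.single_eq_of_ne'
    intro hcon
    exact hσ.2 (by rw [hcon]; exact Finset.mem_coe.2 hmem)
  have h2 : bdries k Kc 1 ≤ LinearMap.ker φ := by
    rw [bdries_eq, Submodule.span_le]
    rintro x ⟨σ, hσ, rfl⟩
    simp only [SetLike.mem_coe, LinearMap.mem_ker, hφ, Finsupp.lapply_apply]
    have hiσ : i ∉ σ := hiso σ hσ.1 hσ.2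
    rw [bd, Finsupp.finset_sum_apply]
    apply Finset.sum_eq_zero
    intro v hv
    apply Finsupp.single_eq_of_ne'
    intro hcon
    apply hiσ
    have hh : i ∈ σ.erase v := by rw [hcon]; exact Finset.mem_singleton_self i
    exact Finset.mem_of_mem_erase hh
  have h3 : Finsupp.single ({i} : Finset (Fin 3)) (1:k) ∈ chains k Kc 1 :=
    Submodule.subset_span ⟨{i}, ⟨hi, Finset.card_singleton _⟩, rfl⟩
  rw [← hS.2.2] at h3
  have h4 := LinearMap.mem_ker.1 ((sup_le h1 h2) h3)
  rw [hφ, Finsupp.lapply_apply, Finsupp.single_eq_same] at h4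
  exact one_ne_zero h4

lemma hedgeRim_top (Kc : Set (Finset (Fin 3))) (i : Fin 3)
    (hi : ({i} : Finset (Fin 3)) ∈ Kc) (hiso : ∀ σ ∈ Kc, σ.card = 2 → i ∉ σ)
    (S : Finset (Finset (Fin 3))) (hS : IsStakeSet k Kc 1 S) :
    hedgeRim k Kc 1 S ({i} : Finset (Fin 3)) = Finsupp.single {i} 1 := by
  have hni := stake_top_not_mem k Kc i hi hiso S hS
  have hmem : Finsupp.single ({i} : Finset (Fin 3)) (1:k) ∈
      Submodule.span k (sset k (faces Kc 1 \ (S : Set (Finset (Fin 3))))) :=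
    Submodule.subset_span ⟨{i}, ⟨⟨hi, Finset.card_singleton _⟩,
      fun h => hni (Finset.mem_coe.1 h)⟩, rfl⟩
  apply hedgeRim_spec
  · exact ⟨hmem, by rw [sub_self]; exact Submodule.zero_mem _⟩
  · intro w hw
    have hdiff : w - Finsupp.single {i} 1 ∈
        Submodule.span k (sset k (faces Kc 1 \ (S : Set (Finset (Fin 3))))) ⊓ bdries k Kc 1 := by
      apply Submodule.mem_inf.2
      constructor
      · exact Submodule.sub_mem _ hw.1 hmem
      · have hn := Submodule.neg_mem _ hw.2
        rwa [neg_sub] at hn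
    rw [hS.2.1, Submodule.mem_bot] at hdiff
    exact sub_eq_zero.1 hdiff

lemma stake_top_exists (Kc : Set (Finset (Fin 3))) (i : Fin 3)
    (hdown : ∀ τ' τ : Finset (Fin 3), τ' ⊆ τ → τ ∈ Kc → τ' ∈ Kc)
    (hi : ({i} : Finset (Fin 3)) ∈ Kc) (hiso : ∀ σ ∈ Kc, σ.card = 2 → i ∉ σ) :
    ∃ S, IsStakeSet k Kc 1 S := by
  set ec : Finset (Fin 3) := ({i} : Finset (Fin 3))ᶜ with hec
  have hcard_ec : ec.card = 2 := by
    rw [hec, Finset.card_compl, Finset.card_singleton]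
    simp
  have hfaces2 : ∀ σ, σ ∈ faces Kc 2 → σ = ec := by
    intro σ hσ
    have hiσ : i ∉ σ := hiso σ hσ.1 hσ.2
    have hsub : σ ⊆ ec := by
      intro v hv
      rw [hec, Finset.mem_compl, Finset.mem_singleton]
      rintro rfl; exact hiσ hv
    exact Finset.eq_of_subset_of_card_le hsub (by rw [hcard_ec, hσ.2])
  by_cases hecK : ec ∈ Kc
  · obtain ⟨j0, k0, hjk, hecjk⟩ := Finset.card_eq_two.1 hcard_ec
    have hj0i : j0 ≠ i := by
      have hh : j0 ∈ ec := by rw [hecjk]; exact Finset.mem_insert_self _ _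
      rw [hec, Finset.mem_compl, Finset.mem_singleton] at hh; exact hh
    have hk0i : k0 ≠ i := by
      have hh : k0 ∈ ec := by
        rw [hecjk]; exact Finset.mem_insert_of_mem (Finset.mem_singleton_self _)
      rw [hec, Finset.mem_compl, Finset.mem_singleton] at hh; exact hh
    have hj0K : ({j0} : Finset (Fin 3)) ∈ Kc := by
      apply hdown _ ec _ hecK
      rw [hecjk]; exact Finset.singleton_subset_iff.2 (Finset.mem_insert_self _ _)
    have hk0K : ({k0} : Finset (Fin 3)) ∈ Kc := by
      apply hdown _ ec _ hecK
      rw [hecjk]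
      exact Finset.singleton_subset_iff.2 (Finset.mem_insert_of_mem (Finset.mem_singleton_self _))
    have hfaces1 : faces Kc 1 =
        {({i} : Finset (Fin 3)), ({j0} : Finset (Fin 3)), ({k0} : Finset (Fin 3))} := by
      ext σ
      simp only [faces, Set.mem_setOf_eq, Set.mem_insert_iff, Set.mem_singleton_iff]
      constructor
      · rintro ⟨h1, h2⟩
        obtain ⟨v, rfl⟩ := Finset.card_eq_one.1 h2
        by_cases hvi : v = i
        · subst hvi; exact Or.inl rfl
        · have hvec : v ∈ ec := by
            rw [hec, Finset.mem_compl, Finset.mem_singleton]; exact hvi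
          rw [hecjk] at hvec
          rcases Finset.mem_insert.1 hvec with rfl | hvk
          · exact Or.inr (Or.inl rfl)
          · rw [Finset.mem_singleton] at hvk; subst hvk; exact Or.inr (Or.inr rfl)
      · rintro (rfl | rfl | rfl)
        · exact ⟨hi, Finset.card_singleton _⟩
        · exact ⟨hj0K, Finset.card_singleton _⟩
        · exact ⟨hk0K, Finset.card_singleton _⟩
    have hfaces2' : faces Kc 2 = {ec} := by
      ext σ
      simp only [Set.mem_singleton_iff]
      constructor
      · exact hfaces2 σ
      · rintro rfl; exact ⟨hecK, hcard_ec⟩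
    have hbdries : bdries k Kc 1 = Submodule.span k {bd k ec} := by
      rw [bdries_eq, hfaces2', Set.image_singleton]
    set β : k := ((esgn j0 ({j0, k0} : Finset (Fin 3)) : ℤ) : k) with hβ
    set γ : k := ((esgn k0 ({j0, k0} : Finset (Fin 3)) : ℤ) : k) with hγ
    have hj0nk : j0 ∉ ({k0} : Finset (Fin 3)) := by simp [hjk]
    have hbd : bd k ec = Finsupp.single {k0} β + Finsupp.single {j0} γ := by
      rw [hecjk, bd, Finset.sum_pair hjk, Finset.erase_insert hj0nk,
        Finset.erase_insert_of_ne hjk, Finset.erase_singleton, hβ, hγ]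
      simp
    have hβ0 : β ≠ 0 := esgn_cast_ne_zero k _ _
    have hγ0 : γ ≠ 0 := esgn_cast_ne_zero k _ _
    have hsnejk : ({k0} : Finset (Fin 3)) ≠ ({j0} : Finset (Fin 3)) :=
      fun h => (Ne.symm hjk) (Finset.singleton_injective h)
    have hsneij : ({i} : Finset (Fin 3)) ≠ ({j0} : Finset (Fin 3)) :=
      fun h => hj0i (Finset.singleton_injective h).symm
    refine ⟨{({j0} : Finset (Fin 3))}, ?_, ?_, ?_⟩
    · intro x hx
      rw [Finset.coe_singleton, Set.mem_singleton_iff] at hx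
      subst hx
      exact ⟨hj0K, Finset.card_singleton _⟩
    · rw [hbdries]
      apply (Submodule.eq_bot_iff _).2
      intro x hx
      obtain ⟨hx1, hx2⟩ := Submodule.mem_inf.1 hx
      obtain ⟨t, ht⟩ := Submodule.mem_span_singleton.1 hx2
      have hxj0 : x {j0} = 0 := by
        rw [span_sset, Finsupp.mem_supported] at hx1
        apply Finsupp.notMem_support_iff.1
        intro hmem
        exact (hx1 hmem).2 (by simp)
      have hc : x {j0} = t * γ := by
        rw [← ht, hbd, Finsupp.smul_apply, Finsupp.add_apply,
          Finsupp.single_eq_of_ne' hsnejk, Finsupp.single_eq_same, zero_add, smul_eq_mul]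
      have ht0 : t = 0 := by
        rcases mul_eq_zero.1 (hc ▸ hxj0) with h | h
        · exact h
        · exact absurd h hγ0
      rw [← ht, ht0, zero_smul]
    · apply le_antisymm
      · apply sup_le
        · rw [chains_eq, span_sset]
          exact Finsupp.supported_mono Set.diff_subset
        · rw [hbdries, chains_eq, Submodule.span_le, Set.singleton_subset_iff]
          rw [SetLike.mem_coe, Finsupp.mem_supported]
          intro y hy
          rw [Finset.mem_coe] at hy
          rw [hbd] at hy
          rcases Finset.mem_union.1 (Finsupp.support_add hy) with h | h
          · have hh := Finsupp.support_single_subset h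
            rw [Finset.mem_singleton] at hh
            subst hh
            exact ⟨hk0K, Finset.card_singleton _⟩
          · have hh := Finsupp.support_single_subset h
            rw [Finset.mem_singleton] at hh
            subst hh
            exact ⟨hj0K, Finset.card_singleton _⟩
      · show Submodule.span k (sset k (faces Kc 1)) ≤ _
        rw [Submodule.span_le]
        rintro x ⟨σ, hσ, rfl⟩
        rw [hfaces1] at hσ
        simp only [Set.mem_insert_iff, Set.mem_singleton_iff] at hσ
        rcases hσ with rfl | rfl | rfl
        · apply SetLike.mem_coe.2
          apply Submodule.mem_sup_left
          apply Submodule.subset_span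
          refine ⟨{i}, ⟨?_, ?_⟩, rfl⟩
          · rw [hfaces1]; exact Or.inl rfl
          · intro h
            exact hsneij (by simpa using h)
        · apply SetLike.mem_coe.2
          have hkey : bd k ec - Finsupp.single {k0} β = Finsupp.single {j0} γ := by
            rw [hbd, add_sub_cancel_left]
          have hexp : Finsupp.single ({j0} : Finset (Fin 3)) (1:k) =
              γ⁻¹ • (bd k ec - Finsupp.single {k0} β) := by
            rw [hkey, Finsupp.smul_single, smul_eq_mul, inv_mul_cancel₀ hγ0]
          change Finsupp.single ({j0} : Finset (Fin 3)) (1:k) ∈ _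
          rw [hexp]
          apply Submodule.smul_mem
          apply Submodule.sub_mem
          · apply Submodule.mem_sup_right
            rw [hbdries]
            exact Submodule.mem_span_singleton_self _
          · apply Submodule.mem_sup_left
            have hexp2 : Finsupp.single ({k0} : Finset (Fin 3)) β =
                β • Finsupp.single {k0} (1:k) := by
              rw [Finsupp.smul_single, smul_eq_mul, mul_one]
            rw [hexp2]
            apply Submodule.smul_mem
            apply Submodule.subset_span
            refine ⟨{k0}, ⟨?_, ?_⟩, rfl⟩
            · rw [hfaces1]; exact Or.inr (Or.inr rfl)
            · intro h
              exact hsnejk (by simpa using h)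
        · apply SetLike.mem_coe.2
          apply Submodule.mem_sup_left
          apply Submodule.subset_span
          refine ⟨{k0}, ⟨?_, ?_⟩, rfl⟩
          · rw [hfaces1]; exact Or.inr (Or.inr rfl)
          · intro h
            exact hsnejk (by simpa using h)
  · have hfaces2' : faces Kc 2 = ∅ := by
      ext σ
      simp only [Set.mem_empty_iff_false, iff_false]
      intro hσ
      exact hecK ((hfaces2 σ hσ) ▸ hσ.1)
    have hbdbot : bdries k Kc 1 = ⊥ := by
      rw [bdries_eq, hfaces2', Set.image_empty, Submodule.span_empty]
    refine ⟨∅, ?_, ?_, ?_⟩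
    · rw [Finset.coe_empty]; exact Set.empty_subset _
    · rw [hbdbot, inf_bot_eq]
    · rw [hbdbot, sup_bot_eq, Finset.coe_empty, Set.diff_empty]
      rfl

-- ==================== Koszul complex generalities ====================

lemma ind01 (τ : Finset (Fin 3)) (q : Fin 3) : ind τ q = 0 ∨ ind τ q = 1 := by
  unfold ind; split <;> simp

lemma Kdown {I : Set V3} (hI : IsMonomialIdeal I) {c : V3} {τ' τ : Finset (Fin 3)}
    (hsub : τ' ⊆ τ) (hτ : τ ∈ K I c) : τ' ∈ K I c := by
  obtain ⟨h1, h2⟩ := hτ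
  have hind : ∀ q, ind τ' q ≤ ind τ q := by
    intro q
    by_cases h : q ∈ τ'
    · simp [ind, h, hsub h]
    · simp [ind, h]
  exact ⟨fun q => le_trans (hind q) (h1 q), hI h2 fun q => Nat.sub_le_sub_left (hind q) _⟩

lemma three_elems : ∀ i' : Fin 3, ∃ j j' : Fin 3,
    j ≠ i' ∧ j' ≠ i' ∧ j ≠ j' ∧ ∀ v : Fin 3, v = i' ∨ v = j ∨ v = j' := by decide

-- ==================== the main theorem ====================

/-- If `i` is an isolated vertex of the disconnected Koszul complex
`K^b I` and `a` is the minimal generator degree with `b - a = n·e_i`, then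
`D_{∅,i}^{a,b} = 1`. -/
theorem statement0 (k : Type) [Field k] (h2 : (2:k) ≠ 0) (h3 : (3:k) ≠ 0)
    (I : Set V3) (hI : IsMonomialIdeal I) (a b : V3) (i : Fin 3) (n : ℕ) (hn : 1 ≤ n)
    (hb : ∀ q, b q = a q + n * stdVec i q)
    (hH0 : H0nontrivial k (K I b))
    (hvertex : ({i} : Finset (Fin 3)) ∈ K I b)
    (hisolated : ∀ σ ∈ K I b, σ.card = 2 → i ∉ σ)
    (hgen : IsMinGen I a) :
    D k I a b 1 (∅ : Finset (Fin 3)) ({i} : Finset (Fin 3)) = 1 := by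
  classical
  have hstd_i : stdVec i i = 1 := by simp [stdVec]
  have hstd_ne : ∀ q, q ≠ i → stdVec i q = 0 := fun q hq => by simp [stdVec, hq]
  have hNn : nlen a b = n := by
    have h1 : ∀ q, b q - a q = n * stdVec i q := fun q => by rw [hb q]; omega
    unfold nlen
    simp only [h1]
    rw [← Finset.mul_sum]
    have hsum : (∑ q, stdVec i q) = 1 := by
      simp [stdVec, Finset.sum_ite_eq']
    rw [hsum, mul_one]
  unfold D
  set N := nlen a b with hNdef
  have hN1 : 1 ≤ N := by omega
  have hbN : ∀ q, b q = a q + N * stdVec i q := fun q => by rw [hNn]; exact hb q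
  set dstar : Fin N → Fin 3 := fun _ => i with hdstar
  -- lattice path point computations
  have hptconst : ∀ m : ℕ, m ≤ N → pt a dstar m = fun q => a q + m * stdVec i q := by
    intro m hm
    funext q
    show a q + (∑ m' ∈ Finset.range m, if h : m' < N then stdVec (dstar ⟨m',h⟩) q else 0)
        = a q + m * stdVec i q
    congr 1
    have hterm : ∀ m' ∈ Finset.range m,
        (if h : m' < N then stdVec (dstar ⟨m',h⟩) q else 0) = stdVec i q := by
      intro m' hm'
      rw [dif_pos (lt_of_lt_of_le (Finset.mem_range.1 hm') hm)]
    rw [Finset.sum_congr rfl hterm, Finset.sum_const, Finset.card_range, smul_eq_mul]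
  have hpt0 : pt a dstar 0 = a := by
    rw [hptconst 0 (Nat.zero_le _)]
    funext q; simp
  have hptN : pt a dstar N = b := by
    rw [hptconst N le_rfl]
    funext q; exact (hbN q).symm
  -- the set of lattice paths is a singleton
  have hpathset : {d : Fin N → Fin 3 | pt a d N = b} = {dstar} := by
    ext d
    simp only [Set.mem_setOf_eq, Set.mem_singleton_iff]
    constructor
    · intro hd
      funext m
      by_contra hm
      have hmi : d m ≠ i := by simpa [hdstar] using hm
      have hge : a (d m) + 1 ≤ pt a d N (d m) := by
        show a (d m) + 1 ≤ a (d m) +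
          ∑ m' ∈ Finset.range N, (if h : m' < N then stdVec (d ⟨m',h⟩) (d m) else 0)
        have hmem : (m : ℕ) ∈ Finset.range N := Finset.mem_range.2 m.isLt
        have hone : (1:ℕ) ≤ ∑ m' ∈ Finset.range N,
            (if h : m' < N then stdVec (d ⟨m',h⟩) (d m) else 0) := by
          have hval : (if h : (m:ℕ) < N then stdVec (d ⟨(m:ℕ),h⟩) (d m) else 0) = 1 := by
            rw [dif_pos m.isLt]
            simp [stdVec]
          have hle := Finset.single_le_sum
            (f := fun m' => if h : m' < N then stdVec (d ⟨m',h⟩) (d m) else 0)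
            (fun x _ => Nat.zero_le _) hmem
          exact le_trans (le_of_eq hval.symm) hle
        omega
      have heq : pt a d N (d m) = a (d m) := by
        rw [hd, hbN (d m), hstd_ne (d m) hmi]
        omega
      omega
    · rintro rfl
      exact hptN
  -- bottom Koszul complex
  have hKa : K I a = ({∅} : Set (Finset (Fin 3))) := by
    ext σ
    simp only [Set.mem_singleton_iff]
    constructor
    · rintro ⟨h1, hk2⟩
      by_contra hne
      obtain ⟨v, hv⟩ := Finset.nonempty_iff_ne_empty.2 hne
      have heq := hgen.2 _ hk2 (fun q => Nat.sub_le _ _)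
      have hv1 : ind σ v = 1 := by simp [ind, hv]
      have hav : 1 ≤ a v := by
        have hh := h1 v; rwa [hv1] at hh
      have h5 : a v - ind σ v = a v := congrFun heq v
      rw [hv1] at h5
      omega
    · rintro rfl
      refine ⟨fun q => by simp [ind], ?_⟩
      have he : (fun q => a q - ind (∅ : Finset (Fin 3)) q) = a := by
        funext q; simp [ind]
      rw [he]; exact hgen.1
  -- interior Koszul complexes
  have hKint : ∀ m : ℕ, 1 ≤ m → m < N →
      K I (fun q => a q + m * stdVec i q) = ({∅, {i}} : Set (Finset (Fin 3))) := by
    intro m hm1 hmN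
    ext σ
    simp only [Set.mem_insert_iff, Set.mem_singleton_iff]
    constructor
    · rintro ⟨h1, hk2⟩
      by_cases hsub : σ ⊆ {i}
      · exact Finset.subset_singleton_iff.1 hsub
      · exfalso
        obtain ⟨j, hjσ, hji⟩ := Finset.not_subset.1 hsub
        have hji' : j ≠ i := by simpa using hji
        have hσj : ind σ j = 1 := by simp [ind, hjσ]
        have hIc : (fun q => b q - ind ({i,j} : Finset (Fin 3)) q) ∈ I := by
          refine hI hk2 fun q => ?_
          show a q + m * stdVec i q - ind σ q ≤ b q - ind ({i,j} : Finset (Fin 3)) q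
          rw [hbN q]
          by_cases hqi : q = i
          · rw [hqi, hstd_i]
            have e2 : ind ({i,j} : Finset (Fin 3)) i = 1 := by simp [ind]
            rw [e2]
            rcases ind01 σ i with h | h <;> rw [h] <;> omega
          · rw [hstd_ne q hqi]
            by_cases hqj : q = j
            · have e2 : ind ({i,j} : Finset (Fin 3)) q = 1 := by simp [ind, hqj]
              rw [e2, hqj, hσj]
              omega
            · have e2 : ind ({i,j} : Finset (Fin 3)) q = 0 := by simp [ind, hqi, hqj]
              rw [e2]
              rcases ind01 σ q with h | h <;> rw [h] <;> omega
        have haj : 1 ≤ a j := by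
          have hh : ind σ j ≤ a j + m * stdVec i j := h1 j
          rw [hσj, hstd_ne j hji'] at hh
          omega
        have hmem2 : ({i,j} : Finset (Fin 3)) ∈ K I b := by
          refine ⟨fun q => ?_, hIc⟩
          show ind ({i,j} : Finset (Fin 3)) q ≤ b q
          rw [hbN q]
          by_cases hqi : q = i
          · have e2 : ind ({i,j} : Finset (Fin 3)) q = 1 := by simp [ind, hqi]
            rw [e2, hqi, hstd_i]
            omega
          · rw [hstd_ne q hqi]
            by_cases hqj : q = j
            · have e2 : ind ({i,j} : Finset (Fin 3)) q = 1 := by simp [ind, hqj]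
              rw [e2, hqj]
              omega
            · have e2 : ind ({i,j} : Finset (Fin 3)) q = 0 := by simp [ind, hqi, hqj]
              rw [e2]
              omega
        have hcard2 : ({i,j} : Finset (Fin 3)).card = 2 := Finset.card_pair (Ne.symm hji')
        exact hisolated _ hmem2 hcard2 (Finset.mem_insert_self i {j})
    · rintro (rfl | rfl)
      · refine ⟨fun q => ?_, ?_⟩
        · show ind (∅ : Finset (Fin 3)) q ≤ a q + m * stdVec i q
          have e2 : ind (∅ : Finset (Fin 3)) q = 0 := by simp [ind]
          rw [e2]
          exact Nat.zero_le _
        · refine hI hgen.1 fun q => ?_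
          show a q ≤ a q + m * stdVec i q - ind (∅ : Finset (Fin 3)) q
          have e2 : ind (∅ : Finset (Fin 3)) q = 0 := by simp [ind]
          rw [e2, Nat.sub_zero]
          exact Nat.le_add_right _ _
      · refine ⟨fun q => ?_, ?_⟩
        · show ind ({i} : Finset (Fin 3)) q ≤ a q + m * stdVec i q
          by_cases hqi : q = i
          · have e2 : ind ({i} : Finset (Fin 3)) q = 1 := by simp [ind, hqi]
            rw [e2, hqi, hstd_i]
            omega
          · have e2 : ind ({i} : Finset (Fin 3)) q = 0 := by simp [ind, hqi]
            rw [e2]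
            exact Nat.zero_le _
        · refine hI hgen.1 fun q => ?_
          show a q ≤ a q + m * stdVec i q - ind ({i} : Finset (Fin 3)) q
          by_cases hqi : q = i
          · have e2 : ind ({i} : Finset (Fin 3)) q = 1 := by simp [ind, hqi]
            rw [e2, hqi, hstd_i]
            omega
          · have e2 : ind ({i} : Finset (Fin 3)) q = 0 := by simp [ind, hqi]
            rw [e2, hstd_ne q hqi]
            omega
  have hdown : ∀ τ' τ : Finset (Fin 3), τ' ⊆ τ → τ ∈ K I b → τ' ∈ K I b :=
    fun τ' τ hsub hτ => Kdown hI hsub hτ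
  -- interior complexes along the path
  have hKptm : ∀ m : Fin (N+1), 0 < (m:ℕ) → (m:ℕ) < N →
      K I (pt a dstar (m:ℕ)) = ({∅, {i}} : Set (Finset (Fin 3))) := by
    intro m hm1 hm2
    rw [hptconst (m:ℕ) (le_of_lt hm2)]
    exact hKint (m:ℕ) hm1 hm2
  -- pinned hedgerow components
  set Sfun : Fin (N+1) → Finset (Finset (Fin 3)) :=
    fun m => if 0 < (m:ℕ) ∧ (m:ℕ) < N then {∅} else ∅ with hSfun
  set Tfun : Fin (N+1) → Finset (Finset (Fin 3)) :=
    fun m => if 0 < (m:ℕ) ∧ (m:ℕ) < N then {({i} : Finset (Fin 3))} else ∅ with hTfun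
  have hSfun_int : ∀ m : Fin (N+1), 0 < (m:ℕ) → (m:ℕ) < N → Sfun m = {∅} := by
    intro m hm1 hm2
    rw [hSfun]
    exact if_pos ⟨hm1, hm2⟩
  have hSfun_out : ∀ m : Fin (N+1), ¬(0 < (m:ℕ) ∧ (m:ℕ) < N) → Sfun m = ∅ := by
    intro m hm
    rw [hSfun]
    exact if_neg hm
  have hTfun_int : ∀ m : Fin (N+1), 0 < (m:ℕ) → (m:ℕ) < N →
      Tfun m = {({i} : Finset (Fin 3))} := by
    intro m hm1 hm2
    rw [hTfun]
    exact if_pos ⟨hm1, hm2⟩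
  have hTfun_out : ∀ m : Fin (N+1), ¬(0 < (m:ℕ) ∧ (m:ℕ) < N) → Tfun m = ∅ := by
    intro m hm
    rw [hTfun]
    exact if_neg hm
  -- hedgerow characterization
  have hrowchar : ∀ h : HRData N, IsHedgerow k I a dstar 1 h ↔
      (IsStakeSet k (K I b) 1 h.1 ∧ h.2.1 = Sfun ∧ h.2.2.1 = Tfun ∧ h.2.2.2 = ∅) := by
    intro h
    constructor
    · rintro ⟨hh1, hh2, hh3, hh4⟩
      rw [hptN] at hh1
      refine ⟨hh1, ?_, ?_, ?_⟩
      · funext m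
        by_cases hm : 0 < (m:ℕ) ∧ (m:ℕ) < N
        · have hst := (hh2 m hm.1 hm.2).1
          rw [hKptm m hm.1 hm.2] at hst
          rw [hSfun_int m hm.1 hm.2]
          exact (stake0_char k i _).1 hst
        · rw [hSfun_out m hm]
          have hm0 : (m:ℕ) = 0 ∨ (m:ℕ) = N := by
            have := m.isLt
            omega
          exact (hh3 m hm0).1
      · funext m
        by_cases hm : 0 < (m:ℕ) ∧ (m:ℕ) < N
        · have hst := (hh2 m hm.1 hm.2).2
          rw [hKptm m hm.1 hm.2] at hst
          rw [hTfun_int m hm.1 hm.2]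
          exact (shrub1_char k i _).1 hst
        · rw [hTfun_out m hm]
          have hm0 : (m:ℕ) = 0 ∨ (m:ℕ) = N := by
            have := m.isLt
            omega
          exact (hh3 m hm0).2
      · have hh4' := hh4
        rw [hKa] at hh4'
        exact (shrubA_char k _).1 hh4'
    · rintro ⟨hS, hs1, hs2, hs3⟩
      refine ⟨?_, ?_, ?_, ?_⟩
      · rw [hptN]; exact hS
      · intro m hm1 hm2
        rw [hKptm m hm1 hm2]
        constructor
        · rw [hs1, hSfun_int m hm1 hm2]
          exact (stake0_char k i _).2 rfl
        · rw [hs2, hTfun_int m hm1 hm2]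
          exact (shrub1_char k i _).2 rfl
      · intro m hm
        have hnm : ¬ (0 < (m:ℕ) ∧ (m:ℕ) < N) := by omega
        exact ⟨by rw [hs1, hSfun_out m hnm], by rw [hs2, hTfun_out m hnm]⟩
      · rw [hs3, hKa]
        exact (shrubA_char k _).2 rfl
  -- Delta is positive and at most 4
  have hstake_ex : ∃ S, IsStakeSet k (K I b) 1 S :=
    stake_top_exists k (K I b) i hdown hvertex hisolated
  have hΔpos : 0 < Delta k I a dstar 1 := by
    obtain ⟨S0, hS0⟩ := hstake_ex
    have hne : Nonempty {h : HRData N // IsHedgerow k I a dstar 1 h} :=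
      ⟨⟨(S0, Sfun, Tfun, ∅), (hrowchar _).2 ⟨hS0, rfl, rfl, rfl⟩⟩⟩
    exact Nat.card_pos_iff.2 ⟨hne, inferInstance⟩
  have hΔle : Delta k I a dstar 1 ≤ 4 := by
    obtain ⟨j0, k0, hji, hki, hjk, hall⟩ := three_elems i
    have hforce : ∀ h : {h : HRData N // IsHedgerow k I a dstar 1 h},
        (h : HRData N) = ((h : HRData N).1, Sfun, Tfun, ∅) := by
      rintro ⟨⟨S, Sf, Tf, Ta⟩, hh⟩
      obtain ⟨hS, hc1, hc2, hc3⟩ := (hrowchar _).1 hh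
      show (S, Sf, Tf, Ta) = (S, Sfun, Tfun, ∅)
      rw [show Sf = Sfun from hc1, show Tf = Tfun from hc2, show Ta = ∅ from hc3]
    have hmemchar : ∀ h : {h : HRData N // IsHedgerow k I a dstar 1 h},
        ∀ x ∈ (h : HRData N).1, x = ({j0} : Finset (Fin 3)) ∨ x = ({k0} : Finset (Fin 3)) := by
      intro h x hx
      obtain ⟨hS, -, -, -⟩ := (hrowchar _).1 h.2
      have hfa := hS.1 (Finset.mem_coe.2 hx)
      obtain ⟨v, rfl⟩ := Finset.card_eq_one.1 hfa.2
      have hni := stake_top_not_mem k (K I b) i hvertex hisolated _ hS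
      rcases hall v with rfl | rfl | rfl
      · exact absurd hx hni
      · exact Or.inl rfl
      · exact Or.inr rfl
    have hcard4 : Nat.card (Bool × Bool) = 4 := by
      rw [Nat.card_eq_fintype_card]
      decide
    rw [show (4:ℕ) = Nat.card (Bool × Bool) from hcard4.symm]
    apply Nat.card_le_card_of_injective
      (fun h : {h : HRData N // IsHedgerow k I a dstar 1 h} =>
        (decide (({j0} : Finset (Fin 3)) ∈ (h : HRData N).1),
         decide (({k0} : Finset (Fin 3)) ∈ (h : HRData N).1)))
    intro h h' heq
    have hj : (({j0} : Finset (Fin 3)) ∈ (h : HRData N).1) ↔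
        (({j0} : Finset (Fin 3)) ∈ (h' : HRData N).1) :=
      decide_eq_decide.1 (congrArg Prod.fst heq)
    have hk : (({k0} : Finset (Fin 3)) ∈ (h : HRData N).1) ↔
        (({k0} : Finset (Fin 3)) ∈ (h' : HRData N).1) :=
      decide_eq_decide.1 (congrArg Prod.snd heq)
    have hSeq : (h : HRData N).1 = (h' : HRData N).1 := by
      ext x
      constructor
      · intro hx
        rcases hmemchar h x hx with rfl | rfl
        · exact hj.1 hx
        · exact hk.1 hx
      · intro hx
        rcases hmemchar h' x hx with rfl | rfl
        · exact hj.2 hx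
        · exact hk.2 hx
    apply Subtype.ext
    rw [hforce h, hforce h', hSeq]
  have hΔk : ((Delta k I a dstar 1 : ℕ) : k) ≠ 0 := by
    have h4 : (4:k) ≠ 0 := by
      intro hc
      apply mul_ne_zero h2 h2
      rw [show (2:k)*2 = 4 by norm_num, hc]
    have hcases : Delta k I a dstar 1 = 1 ∨ Delta k I a dstar 1 = 2 ∨
        Delta k I a dstar 1 = 3 ∨ Delta k I a dstar 1 = 4 := by omega
    rcases hcases with h | h | h | h <;> rw [h]
    · simp
    · simpa using h2
    · simpa using h3
    · simpa using h4
  -- pinned fence components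
  set τstar : Fin (N+1) → Finset (Fin 3) :=
    fun m => if (m:ℕ) = 0 then ∅ else {i} with hτstar
  set σstar : Fin (N+1) → Finset (Fin 3) := fun _ => ∅ with hσstar
  have hτval : ∀ m : Fin (N+1), (m:ℕ) ≠ 0 → τstar m = {i} := by
    intro m hm
    rw [hτstar]
    exact if_neg hm
  have hτ0val : ∀ m : Fin (N+1), (m:ℕ) = 0 → τstar m = ∅ := by
    intro m hm
    rw [hτstar]
    exact if_pos hm
  have hσval : ∀ m : Fin (N+1), σstar m = ∅ := by
    intro m
    rw [hσstar]
  have hlastne0 : ((Fin.last N : Fin (N+1)) : ℕ) ≠ 0 := by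
    rw [Fin.val_last]
    omega
  have hrimval : ∀ S : Finset (Finset (Fin 3)), IsStakeSet k (K I b) 1 S →
      hedgeRim k (K I (pt a dstar N)) 1 S ({i} : Finset (Fin 3)) = Finsupp.single {i} 1 := by
    intro S hS
    rw [hptN]
    exact hedgeRim_top k (K I b) i hvertex hisolated _ hS
  -- fence characterization
  have hfencechar : ∀ f : FData N, IsFence k I a dstar 1 ∅ {i} f ↔
      (IsHedgerow k I a dstar 1 f.1 ∧ f.2.1 = τstar ∧ f.2.2 = σstar) := by
    intro f
    constructor
    · rintro ⟨hH, hτf, hσf, hτ0, hσn, hrim, hers, hint, hcirc⟩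
      have hσall : ∀ m : Fin (N+1), f.2.2 m = ∅ := by
        intro m
        by_cases hmN : (m:ℕ) < N
        · exact Finset.card_eq_zero.1 (hσf m hmN).2
        · have hm : m = Fin.last N := by
            apply Fin.ext
            rw [Fin.val_last]
            have := m.isLt
            omega
          rw [hm]; exact hσn
      have hτall : ∀ m : Fin (N+1), f.2.1 m = τstar m := by
        intro m
        by_cases hm0 : (m:ℕ) = 0
        · rw [hτ0val m hm0]
          have hm00 : m = 0 := Fin.ext (by simpa using hm0)
          rw [hm00]; exact hτ0
        · rw [hτval m hm0]
          have hm0' : 0 < (m:ℕ) := Nat.pos_of_ne_zero hm0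
          by_cases hmN : (m:ℕ) < N
          · have hf := hτf m hm0'
            rw [hKptm m hm0' hmN, faces_pair1] at hf
            simpa using hf
          · have hmN' : (m:ℕ) = N := by
              have := m.isLt
              omega
            have hmm : N - 1 < N := by omega
            set mm : Fin N := ⟨N-1, hmm⟩ with hmmdef
            have hsucc : mm.succ = m := by
              apply Fin.ext
              rw [Fin.val_succ, hmN']
              show N - 1 + 1 = N
              omega
            have her := hers mm
            rw [hsucc, hσall mm.castSucc] at her
            have hdm : dstar mm = i := rfl
            rw [hdm] at her
            have hcard : (f.2.1 m).card = 1 := (hτf m hm0').2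
            rcases (Finset.erase_eq_empty_iff (f.2.1 m) i).1 her.symm with h | h
            · rw [h] at hcard
              simp at hcard
            · exact h
      exact ⟨hH, funext hτall, funext fun m => by rw [hσall m, hσval m]⟩
    · rintro ⟨hH, hf1, hf2⟩
      obtain ⟨hS, hc1, hc2, hc3⟩ := (hrowchar _).1 hH
      have hSb : IsStakeSet k (K I (pt a dstar N)) 1 f.1.1 := hH.1
      rw [hptN] at hSb
      refine ⟨hH, ?_, ?_, ?_, ?_, ?_, ?_, ?_, ?_⟩
      · intro m hm0
        rw [hf1, hτval m (by omega)]
        by_cases hmN : (m:ℕ) < N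
        · rw [hKptm m hm0 hmN, faces_pair1]
          rfl
        · have hmN' : (m:ℕ) = N := by
            have := m.isLt
            omega
          have hpt : pt a dstar ((m:Fin (N+1)):ℕ) = b := by rw [hmN', hptN]
          rw [hpt]
          exact ⟨hvertex, Finset.card_singleton _⟩
      · intro m hmN
        rw [hf2, hσval m]
        by_cases hm0 : 0 < (m:ℕ)
        · rw [hKptm m hm0 hmN]
          exact ⟨Or.inl rfl, Finset.card_empty⟩
        · have hm0' : (m:ℕ) = 0 := by omega
          have hpt : pt a dstar ((m:Fin (N+1)):ℕ) = a := by rw [hm0', hpt0]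
          rw [hpt, hKa]
          exact ⟨rfl, Finset.card_empty⟩
      · rw [hf1]
        exact hτ0val 0 rfl
      · rw [hf2]
      · rw [hf1, hrimval f.1.1 hSb, hτval (Fin.last N) hlastne0, Finsupp.single_eq_same]
        exact one_ne_zero
      · intro m
        rw [hf1, hf2, hσval m.castSucc, hτval m.succ (by rw [Fin.val_succ]; omega)]
        rw [show dstar m = i from rfl, Finset.erase_singleton]
      · intro m hm0 hmN
        constructor
        · rw [hf2, hc1, hσval m, hSfun_int m hm0 hmN]
          exact Finset.mem_singleton_self _
        · rw [hf1, hf2, hc1, hc2, hSfun_int m hm0 hmN, hTfun_int m hm0 hmN,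
            hσval m, hτval m (by omega), shrub_int k i, Finsupp.single_eq_same]
          exact one_ne_zero
      · rw [hf2, hc3, hσval 0, circuit_empty k, Finsupp.single_eq_same]
        exact one_ne_zero
  -- weight of every fence is one
  have hweight : ∀ f : FData N, IsFence k I a dstar 1 ∅ {i} f →
      weight k I a dstar 1 ∅ {i} f = 1 := by
    intro f hf
    obtain ⟨hH, hf1, hf2⟩ := (hfencechar f).1 hf
    obtain ⟨hS, hc1, hc2, hc3⟩ := (hrowchar _).1 hH
    unfold weight
    have e1 : hedgeRim k (K I (pt a dstar N)) 1 f.1.1 {i} (f.2.1 (Fin.last N)) = 1 := by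
      rw [hrimval f.1.1 hS, hf1, hτval (Fin.last N) hlastne0, Finsupp.single_eq_same]
    have e2 : (∏ m : Fin (N+1), if 0 < (m:ℕ) ∧ (m:ℕ) < N
        then shrub k (f.1.2.1 m) (f.1.2.2.1 m) (f.2.2 m) (f.2.1 m) else 1) = 1 := by
      apply Finset.prod_eq_one
      intro m _
      by_cases hm : 0 < (m:ℕ) ∧ (m:ℕ) < N
      · rw [if_pos hm, hc1, hc2, hf1, hf2, hSfun_int m hm.1 hm.2, hTfun_int m hm.1 hm.2,
          hσval m, hτval m (by omega), shrub_int k i, Finsupp.single_eq_same]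
      · rw [if_neg hm]
    have e3 : (∏ m : Fin N,
        bdry k (Finsupp.single (f.2.1 m.succ) (1:k)) (f.2.2 m.castSucc)) = 1 := by
      apply Finset.prod_eq_one
      intro m _
      rw [hf1, hf2, hσval m.castSucc, hτval m.succ (by rw [Fin.val_succ]; omega)]
      rw [bdry_single, one_smul, bd_singleton, Finsupp.single_eq_same]
    have e4 : circuit k f.1.2.2.2 (f.2.2 0) ∅ = 1 := by
      rw [hc3, hf2, hσval 0, circuit_empty k, Finsupp.single_eq_same]
    rw [e1, e2, e3, e4, mul_one, mul_one, mul_one]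
  -- the set of fences
  have hinj2 : Function.Injective (fun h : HRData N => (h, τstar, σstar)) := by
    intro x y hxy
    exact congrArg Prod.fst hxy
  have hFset : {f : FData N | IsFence k I a dstar 1 ∅ {i} f} =
      (fun h : HRData N => (h, τstar, σstar)) '' {h : HRData N | IsHedgerow k I a dstar 1 h} := by
    ext f
    simp only [Set.mem_setOf_eq, Set.mem_image]
    constructor
    · intro hf
      obtain ⟨hH, hf1, hf2⟩ := (hfencechar f).1 hf
      refine ⟨f.1, hH, ?_⟩
      rw [← hf1, ← hf2]
    · rintro ⟨h, hh, rfl⟩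
      exact (hfencechar _).2 ⟨hh, rfl, rfl⟩
  have hcardF : {f : FData N | IsFence k I a dstar 1 ∅ {i} f}.ncard
      = Delta k I a dstar 1 := by
    rw [hFset, Set.ncard_image_of_injective _ hinj2, ← Nat.card_coe_set_eq]
    rfl
  have hsum : (∑ᶠ f ∈ {f : FData N | IsFence k I a dstar 1 ∅ {i} f},
      weight k I a dstar 1 ∅ {i} f) = ((Delta k I a dstar 1 : ℕ) : k) := by
    have hfin : {f : FData N | IsFence k I a dstar 1 ∅ {i} f}.Finite := Set.toFinite _
    have hcong : (∑ᶠ f ∈ {f : FData N | IsFence k I a dstar 1 ∅ {i} f},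
        weight k I a dstar 1 ∅ {i} f)
        = ∑ᶠ f ∈ {f : FData N | IsFence k I a dstar 1 ∅ {i} f}, (1:k) :=
      finsum_mem_congr rfl (fun f hf => hweight f hf)
    rw [hcong, finsum_mem_eq_finite_toFinset_sum _ hfin, Finset.sum_const, nsmul_eq_mul, mul_one]
    congr 1
    rw [← Set.ncard_eq_toFinset_card _ hfin]
    exact hcardF
  -- final assembly
  rw [hpathset, finsum_mem_singleton]
  unfold Dpath
  rw [hsum]
  exact inv_mul_cancel₀ hΔk


end Sylvan

end
end

section
/- Let a ≼ b in ℕ³ with K^b I equal to ⟨ij,ik,jk⟩ and with K^a I disconnected (equivalently dim_k H̃₀(K^a I;k) ≠ 0), and let λ = (a = b_j, …, b₁, b₀ = b) ∈ Λ(a,b) be a lattice path with b − b₁ = e_i. Then the degree-1 contribution along λ satisfies D_{v,{j,k}}^{a,b,λ} = 0 for every vertex v of K^a I, where {j,k} is the edge of K^b I opposite to i. -/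
open Classical

noncomputable section

namespace Sylvan

variable (k : Type) [Field k]

/-- If `K^b I` is the full triangle boundary `⟨ij,ik,jk⟩`,
`K^a I` is disconnected, and the lattice path `λ` first moves back from `b` in the
`i`-direction, then the contribution along `λ` to the entry `D_{v,jk}` is zero for
every vertex `v` of `K^a I`. -/
theorem statement4 (k : Type) [Field k] (h2 : (2:k) ≠ 0) (h3 : (3:k) ≠ 0)
    (I : Set V3) (hI : IsMonomialIdeal I) (a : V3)
    (i j l : Fin 3) (hij : i ≠ j) (hil : i ≠ l) (hjl : j ≠ l)
    (n : ℕ) (hn : 0 < n) (d : Fin n → Fin 3)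
    (hb : hasFacets (K I (pt a d n)) {{i, j}, {i, l}, {j, l}})
    (hH0 : H0nontrivial k (K I a))
    (hlast : d ⟨n - 1, by omega⟩ = i)
    (v : Fin 3) (hv : ({v} : Finset (Fin 3)) ∈ K I a) :
    Dpath k I a d 2 ({v} : Finset (Fin 3)) ({j, l} : Finset (Fin 3)) = 0 := by
  -- The Koszul complex at the top has no 2-dimensional faces.
  have hKb3 : faces (K I (pt a d n)) 3 = (∅ : Set (Finset (Fin 3))) := by
    ext σ
    simp only [faces, Set.mem_setOf_eq, Set.mem_empty_iff_false, iff_false, not_and]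
    intro hK hcard
    rw [hb] at hK
    obtain ⟨g, hg, hsub⟩ := hK
    have h1 := Finset.card_le_card hsub
    have hg2 : g.card ≤ 2 := by
      simp only [Set.mem_insert_iff, Set.mem_singleton_iff] at hg
      rcases hg with h | h | h <;> subst h <;>
        exact le_trans (Finset.card_insert_le _ _) (by simp)
    omega
  -- Hence the boundary module in dimension 1 vanishes.
  have hB : bdries k (K I (pt a d n)) 2 = ⊥ := by
    rw [bdries, chains]
    have : faces (K I (pt a d n)) (2 + 1) = (∅ : Set (Finset (Fin 3))) := hKb3
    rw [this]
    simp [sset]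
  -- There are no chain-link fences.
  have hempty :
      {f : FData n | IsFence k I a d 2 ({v} : Finset (Fin 3)) ({j, l} : Finset (Fin 3)) f}
        = (∅ : Set (FData n)) := by
    ext f
    simp only [Set.mem_setOf_eq, Set.mem_empty_iff_false, iff_false]
    intro hf
    obtain ⟨hhr, hτf, hσf, h01, h02, hrim, hcont, hmid, hcirc⟩ := hf
    -- The hedge rim of {j,l} is the single chain on {j,l}, so τ₀ = {j,l}.
    have htau : f.2.1 (Fin.last n) = ({j, l} : Finset (Fin 3)) := by
      unfold hedgeRim at hrim
      split at hrim
      case isFalse => simp at hrim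
      case isTrue h =>
        have hs := h.exists.choose_spec
        have h2' : Finsupp.single ({j, l} : Finset (Fin 3)) (1 : k) = h.exists.choose :=
          sub_eq_zero.mp (Submodule.mem_bot k |>.mp (hB.le hs.2))
        rw [← h2', Finsupp.single_apply] at hrim
        by_contra hne
        exact hrim (if_neg fun hc => hne hc.symm)
    set m₀ : Fin n := ⟨n - 1, by omega⟩ with hm₀
    have hsucc : m₀.succ = Fin.last n := by
      apply Fin.ext
      simp only [Fin.val_succ, Fin.val_last, hm₀]
      omega
    have heq := hcont m₀
    have hd : d m₀ = i := hlast
    rw [hsucc, htau, hd] at heq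
    have hnotmem : i ∉ ({j, l} : Finset (Fin 3)) := by
      simp [hij, hil]
    rw [Finset.erase_eq_of_notMem hnotmem] at heq
    have hlt : ((m₀.castSucc : Fin (n + 1)) : ℕ) < n := by
      simp only [Fin.coe_castSucc, hm₀]
      omega
    have hmem := hσf m₀.castSucc hlt
    rw [heq] at hmem
    have hcard : ({j, l} : Finset (Fin 3)).card = 2 - 1 := hmem.2
    rw [Finset.card_insert_of_notMem (by simp [hjl])] at hcard
    simp at hcard
  rw [Dpath, hempty]
  simp

end Sylvan

end
end
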